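/- arXiv:2602.18002 — 2 statements merged into one kernel-verified Lean document; each statement's English description precedes it below -/
import Mathlib

section
/- Bias of L2 clipping under a bounded α-th moment: let g be a random vector in a normed space with E[‖g‖^α] < ∞, where α ∈ (1,2), and for u > 0 define Clip(u,g) := g if ‖g‖ ≤ u and (u/‖g‖)·g otherwise. Then E[ ‖Clip(u,g) − g‖ ] ≤ u^{1−α} · E[‖g‖^α]. -/
open MeasureTheory

/-- The L2 clipping operator: `Clip(u,g) = g` if `‖g‖ ≤ u` and `(u/‖g‖)·g` otherwise. -/
noncomputable def clipL2 {E : Type*} [NormedAddCommGroup E] [NormedSpace ℝ E]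
    (u : ℝ) (g : E) : E :=
  if ‖g‖ ≤ u then g else (u / ‖g‖) • g

lemma clip_pointwise {E : Type*} [NormedAddCommGroup E] [NormedSpace ℝ E]
    (u : ℝ) (hu : 0 < u) (α : ℝ) (hα1 : 1 < α) (x : E) :
    ‖clipL2 u x - x‖ ≤ u ^ (1 - α) * ‖x‖ ^ α := by
  have hupos : (0:ℝ) < u ^ (1 - α) := Real.rpow_pos_of_pos hu _
  unfold clipL2
  by_cases h : ‖x‖ ≤ u
  · simp only [h, if_true, sub_self, norm_zero]
    positivity
  · push_neg at h
    have hx : (0:ℝ) < ‖x‖ := lt_trans hu h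
    rw [if_neg (not_le.mpr h)]
    have : (u / ‖x‖) • x - x = (u / ‖x‖ - 1) • x := by
      rw [sub_smul, one_smul]
    rw [this, norm_smul, Real.norm_eq_abs]
    have hle : u / ‖x‖ ≤ 1 := (div_le_one hx).mpr h.le
    rw [abs_of_nonpos (by linarith), neg_sub]
    have h1 : (1 - u / ‖x‖) * ‖x‖ ≤ ‖x‖ := by
      nlinarith [div_nonneg hu.le hx.le]
    refine h1.trans ?_
    have hmono : ‖x‖ ^ (1 - α) ≤ u ^ (1 - α) :=
      Real.rpow_le_rpow_of_nonpos hu h.le (by linarith)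
    calc ‖x‖ = ‖x‖ ^ (1 - α) * ‖x‖ ^ α := by rw [← Real.rpow_add hx]; simp
      _ ≤ u ^ (1 - α) * ‖x‖ ^ α :=
        mul_le_mul_of_nonneg_right hmono (Real.rpow_nonneg hx.le α)

/-- **Bias of L2 clipping under a bounded `α`-th moment.**
If `g` is a random vector in a normed space with `E[‖g‖^α] < ∞`, where `α ∈ (1,2)`,
then for every `u > 0`, `E[‖Clip(u,g) − g‖] ≤ u^(1−α) · E[‖g‖^α]`. -/
theorem clip_bias_of_alpha_moment
    {Ω : Type*} [MeasurableSpace Ω] {E : Type*} [NormedAddCommGroup E] [NormedSpace ℝ E]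
    (μ : Measure Ω) [IsProbabilityMeasure μ]
    (g : Ω → E) (hg : StronglyMeasurable g)
    (α : ℝ) (hα1 : 1 < α) (hα2 : α < 2)
    (hint : Integrable (fun ω => ‖g ω‖ ^ α) μ)
    (u : ℝ) (hu : 0 < u) :
    ∫ ω, ‖clipL2 u (g ω) - g ω‖ ∂μ ≤ u ^ (1 - α) * ∫ ω, ‖g ω‖ ^ α ∂μ := by
  rw [← integral_const_mul]
  apply integral_mono_of_nonneg
  · exact Filter.Eventually.of_forall fun ω => norm_nonneg _
  · exact hint.const_mul _
  · exact Filter.Eventually.of_forall fun ω => clip_pointwise u hu α hα1 (g ω)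
end

section
/- Second-moment bias of scalar clipping: let X be a real random variable with E[|X|^{2α}] ≤ B^{2α}, where α ∈ (1,2) and B > 0, and for u > 0 define clip(u, x) := max(−u, min(x, u)). Then | E[ clip(u, X)² − X² ] | ≤ B^{2α} · u^{2−2α}. -/
open MeasureTheory

/-- **Second-moment bias of scalar clipping.**
If `X` is a real random variable with `E[|X|^{2α}] ≤ B^{2α}`, where `α ∈ (1,2)` and `B > 0`,
and `clip(u,x) := max(−u, min(x,u))` for `u > 0`, then
`|E[clip(u,X)² − X²]| ≤ B^{2α} · u^{2−2α}`. -/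
theorem scalar_clip_second_moment_bias
    {Ω : Type*} [MeasurableSpace Ω] (μ : Measure Ω) [IsProbabilityMeasure μ]
    (X : Ω → ℝ) (hX : Measurable X)
    (α B : ℝ) (hα1 : 1 < α) (hα2 : α < 2) (hB : 0 < B)
    (hint : Integrable (fun ω => |X ω| ^ (2 * α)) μ)
    (hmom : ∫ ω, |X ω| ^ (2 * α) ∂μ ≤ B ^ (2 * α))
    (u : ℝ) (hu : 0 < u) :
    |∫ ω, ((max (-u) (min (X ω) u)) ^ 2 - (X ω) ^ 2) ∂μ| ≤ B ^ (2 * α) * u ^ (2 - 2 * α) := by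
  set g : Ω → ℝ := fun ω => (max (-u) (min (X ω) u)) ^ 2 - (X ω) ^ 2 with hg
  have hexp : (2 : ℝ) - 2 * α ≤ 0 := by linarith
  have hupow : 0 ≤ u ^ (2 - 2 * α) := Real.rpow_nonneg hu.le _
  -- pointwise bound
  have key : ∀ ω, |g ω| ≤ |X ω| ^ (2 * α) * u ^ (2 - 2 * α) := by
    intro ω
    set x := X ω with hx
    rcases le_or_gt (|x|) u with h | h
    · have hxu : x ≤ u := le_of_abs_le h
      have hux : -u ≤ x := neg_le_of_abs_le h
      have : max (-u) (min x u) = x := by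
        rw [min_eq_left hxu, max_eq_right hux]
      simp only [hg, ← hx, this, sub_self, abs_zero]
      positivity
    · have hclip : (max (-u) (min x u)) ^ 2 = u ^ 2 := by
        rcases le_or_gt x 0 with hx0 | hx0
        · have : x < -u := by
            rcases abs_cases x with ⟨h1, _⟩ | ⟨h1, _⟩ <;> nlinarith
          rw [min_eq_left (by linarith), max_eq_left this.le, neg_pow]
          ring_nf
        · have : u < x := by
            rcases abs_cases x with ⟨h1, _⟩ | ⟨h1, _⟩ <;> nlinarith
          rw [min_eq_right this.le, max_eq_right (by linarith)]
      have hxx : x ^ 2 - u ^ 2 ≤ |x| ^ (2 * α) * u ^ (2 - 2 * α) := by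
        have h1 : |x| ^ ((2:ℝ) - 2 * α) ≤ u ^ ((2:ℝ) - 2 * α) :=
          Real.rpow_le_rpow_of_nonpos hu h.le hexp
        have h2 : |x| ^ (2 * α) * |x| ^ ((2:ℝ) - 2 * α) = x ^ 2 := by
          rw [← Real.rpow_add (hu.trans h)]
          norm_num
        have h3 : |x| ^ (2 * α) * |x| ^ ((2:ℝ) - 2 * α) ≤ |x| ^ (2 * α) * u ^ (2 - 2 * α) :=
          mul_le_mul_of_nonneg_left h1 (by positivity)
        nlinarith [sq_nonneg u]
      have habs : |g ω| = x ^ 2 - u ^ 2 := by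
        simp only [hg, hclip, ← hx]
        rw [abs_sub_comm, abs_of_nonneg]
        have : u ^ 2 ≤ x ^ 2 := by nlinarith [abs_nonneg x, sq_abs x]
        linarith
      rw [habs]; exact hxx
  -- integrability
  have hmeas : Measurable g := by
    apply Measurable.sub
    · exact (measurable_const.max (hX.min measurable_const)).pow_const 2
    · exact (hX.pow_const 2)
  have hhint : Integrable (fun ω => |X ω| ^ (2 * α) * u ^ (2 - 2 * α)) μ :=
    hint.mul_const _
  have hgint : Integrable g μ := by
    refine hhint.mono hmeas.aestronglyMeasurable (Filter.Eventually.of_forall fun ω => ?_)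
    rw [Real.norm_eq_abs, Real.norm_eq_abs]
    calc |g ω| ≤ |X ω| ^ (2 * α) * u ^ (2 - 2 * α) := key ω
      _ ≤ |(|X ω| ^ (2 * α) * u ^ (2 - 2 * α))| := le_abs_self _
  calc |∫ ω, g ω ∂μ| ≤ ∫ ω, |g ω| ∂μ := by simpa [Real.norm_eq_abs] using norm_integral_le_integral_norm (μ := μ) g
    _ ≤ ∫ ω, |X ω| ^ (2 * α) * u ^ (2 - 2 * α) ∂μ :=
        integral_mono hgint.abs hhint (fun ω => key ω)
    _ = (∫ ω, |X ω| ^ (2 * α) ∂μ) * u ^ (2 - 2 * α) := integral_mul_const _ _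
    _ ≤ B ^ (2 * α) * u ^ (2 - 2 * α) := mul_le_mul_of_nonneg_right hmom hupow
end
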